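/- For r = 2, the unique formal series a(z) = 1 + Σ a_k z^{-3k} solving S_z^2 a = z^2 a has initial coefficients a_1 = −5/24, a_2 = 385/1152, a_3 = −85085/82944. -/

import Mathlib

open HahnSeries Pointwise

/-- The operator `S_z = z^{1-r} ∂_z - (r-1)/(2 z^r) - z` acting on formal Laurent
series with finitely many positive powers of `z`, written in the variable
`t = z⁻¹` (so `coeff m` is the coefficient of `z^{-m}`). -/
noncomputable def Sop (r : ℕ) (f : LaurentSeries ℂ) : LaurentSeries ℂ where
  coeff m := ((r + 1 : ℂ) / 2 - m) * f.coeff (m - r) - f.coeff (m + 1)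
  isPWO_support' := by
    have h : (Function.support fun m : ℤ =>
        ((r + 1 : ℂ) / 2 - m) * f.coeff (m - r) - f.coeff (m + 1))
        ⊆ (f.support + {(r : ℤ)}) ∪ (f.support + ({(-1 : ℤ)} : Set ℤ)) := by
      intro m hm
      simp only [Function.mem_support] at hm
      by_cases h1 : f.coeff (m - (r : ℤ)) = 0
      · have h2 : f.coeff (m + 1) ≠ 0 := fun h2 => hm (by rw [h1, h2]; ring)
        right
        exact Set.mem_add.mpr ⟨m + 1, by simpa using h2, -1, rfl, by ring⟩
      · left
        exact Set.mem_add.mpr ⟨m - r, by simpa using h1, r, rfl, by ring⟩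
    exact ((f.isPWO_support.add (Set.isPWO_singleton (r : ℤ))).union
      (f.isPWO_support.add (Set.isPWO_singleton (-1 : ℤ)))).mono h

/-- The formal adjoint `S_z^⋆ = -z^{1-r} ∂_z + (r-1)/(2 z^r) - z`. -/
noncomputable def Sstar (r : ℕ) (f : LaurentSeries ℂ) : LaurentSeries ℂ where
  coeff m := ((m : ℂ) - (r + 1) / 2) * f.coeff (m - r) - f.coeff (m + 1)
  isPWO_support' := by
    have h : (Function.support fun m : ℤ =>
        ((m : ℂ) - (r + 1) / 2) * f.coeff (m - r) - f.coeff (m + 1))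
        ⊆ (f.support + {(r : ℤ)}) ∪ (f.support + ({(-1 : ℤ)} : Set ℤ)) := by
      intro m hm
      simp only [Function.mem_support] at hm
      by_cases h1 : f.coeff (m - (r : ℤ)) = 0
      · have h2 : f.coeff (m + 1) ≠ 0 := fun h2 => hm (by rw [h1, h2]; ring)
        right
        exact Set.mem_add.mpr ⟨m + 1, by simpa using h2, -1, rfl, by ring⟩
      · left
        exact Set.mem_add.mpr ⟨m - r, by simpa using h1, r, rfl, by ring⟩
    exact ((f.isPWO_support.add (Set.isPWO_singleton (r : ℤ))).union
      (f.isPWO_support.add (Set.isPWO_singleton (-1 : ℤ)))).mono h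

/-- Substitution `z ↦ ω z` on a formal Laurent series (`coeff m` is the
coefficient of `z^{-m}`, which gets multiplied by `ω^{-m}`). -/
noncomputable def rot (ω : ℂ) (f : LaurentSeries ℂ) : LaurentSeries ℂ where
  coeff m := ω ^ (-m) * f.coeff m
  isPWO_support' := f.isPWO_support.mono (fun m hm => by
    simp only [Function.mem_support] at hm ⊢
    exact fun h => hm (by rw [h, mul_zero]))

/-- For `r = 2`: the unique formal series `a(z) = 1 + Σ a_k z^{-3k}` solving
`S_z^2 a = z^2 a` has `a_1 = -5/24`, `a_2 = 385/1152`, `a_3 = -85085/82944`.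
(`coeff (3k)` is the coefficient `a_k` of `z^{-3k}`; `z^2 = single (-2) 1`.) -/
theorem a_coeffs_r_two (a : LaurentSeries ℂ)
    (ha0 : a.coeff 0 = 1)
    (hsupp : ∀ m : ℤ, a.coeff m ≠ 0 → ∃ k : ℕ, m = 3 * k)
    (hode : (Sop 2)^[2] a = HahnSeries.single (-2 : ℤ) 1 * a) :
    a.coeff 3 = -5/24 ∧ a.coeff 6 = 385/1152 ∧ a.coeff 9 = -85085/82944 := by
  have hS : ∀ (f : LaurentSeries ℂ) (m : ℤ),
      (Sop 2 f).coeff m = ((3:ℂ)/2 - m) * f.coeff (m - 2) - f.coeff (m + 1) := by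
    intro f m
    show ((((2:ℕ):ℂ) + 1) / 2 - m) * f.coeff (m - ((2:ℕ):ℤ)) - f.coeff (m + 1) = _
    norm_num
  have hsingle : ∀ m : ℤ, (HahnSeries.single (-2 : ℤ) (1:ℂ) * a).coeff m = a.coeff (m + 2) := by
    intro m
    rw [show m = (m + 2) + -2 by ring, HahnSeries.coeff_single_mul_add, one_mul]; ring_nf
  have key : ∀ m : ℤ, ((3:ℂ)/2 - m) * ((3:ℂ)/2 - (m - 2)) * a.coeff (m - 4)
      - (2 - 2 * (m:ℂ)) * a.coeff (m - 1) = 0 := by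
    intro m
    have h := congrArg (fun f : LaurentSeries ℂ => f.coeff m) hode
    simp only [Function.iterate_succ, Function.iterate_zero, Function.comp_apply, id_eq] at h
    rw [hS, hS, hS, hsingle] at h
    have h2 : m - 2 - 2 = m - 4 := by ring
    have h3 : m - 2 + 1 = m - 1 := by ring
    have h4 : m + 1 - 2 = m - 1 := by ring
    have h5 : m + 1 + 1 = m + 2 := by ring
    rw [h2, h3, h4, h5] at h
    push_cast at h ⊢
    linear_combination h
  have k1 := key 4
  have k2 := key 7
  have k3 := key 10
  norm_num [ha0] at k1 k2 k3
  -- solve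
  have a3 : a.coeff 3 = -5/24 := by linear_combination k1 / 6
  refine ⟨a3, ?_, ?_⟩
  · rw [a3] at k2; linear_combination k2/12
  · rw [a3] at k2
    have a6 : a.coeff 6 = 385/1152 := by linear_combination k2/12
    rw [a6] at k3; linear_combination k3/18
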